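/- Assume g satisfies conditions (A1)–(A4), and for z ≥ 0 let f_z be the solution of Stein's equation f'(w) − f(w)g(w) = I(w≤z) − F(z), explicitly f_z(w) = F(w)(1−F(z))/p(w) for w ≤ z and f_z(w) = F(z)(1−F(w))/p(w) for w > z. Then: (i) |f_z(w)g(w)| ≤ 1−F(z) for w ≤ 0 and |f_z(w)g(w)| ≤ F(z) for w > 0; (ii) f_z(w) ≤ (1−F(z))/c₁ for w ≤ 0 and f_z(w) ≤ F(z)/c₁ for w > 0; (iii) |f_z'(w)| ≤ 2(1−F(z)) for w ≤ 0, |f_z'(w)| ≤ 1 for 0 < w ≤ z, and |f_z'(w)| ≤ 2F(z) for w > z. -/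

import Mathlib

open MeasureTheory Real

/-- Conditions (A1)–(A4) on the function `g`. -/
structure GCond (g : ℝ → ℝ) (c₂ c₃ : ℝ) : Prop where
  diff : Differentiable ℝ g
  mono : Monotone g
  zero : g 0 = 0
  sign : ∀ y : ℝ, y ≠ 0 → 0 < y * g y
  c₂pos : 0 < c₂
  subadd : ∀ x y : ℝ, |g (x + y)| ≤ c₂ * (|g x| + |g y| + 1)
  c₃ge : 1 ≤ c₃
  derivBound : ∀ y : ℝ, |deriv g y| ≤ c₃ * (1 + |g y|) / (1 + |y|)

/-- `G(y) = ∫₀^y g`. -/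
noncomputable def Gfun (g : ℝ → ℝ) (y : ℝ) : ℝ := ∫ t in (0:ℝ)..y, g t

/-- The density `p(y) = c₁ e^{-G(y)}`. -/
noncomputable def pfun (g : ℝ → ℝ) (c₁ y : ℝ) : ℝ := c₁ * Real.exp (-(Gfun g y))

/-- The distribution function `F(w) = ∫_{-∞}^w p`. -/
noncomputable def Ffun (g : ℝ → ℝ) (c₁ w : ℝ) : ℝ := ∫ y in Set.Iic w, pfun g c₁ y

namespace SteinAux

variable {g : ℝ → ℝ} {c₂ c₃ : ℝ} (hg : GCond g c₂ c₃) {c₁ : ℝ} (hc₁ : 0 < c₁)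

set_option linter.unusedSectionVars false
include hg

lemma g_nonpos {w : ℝ} (hw : w ≤ 0) : g w ≤ 0 := by
  rcases eq_or_lt_of_le hw with h | h
  · rw [h, hg.zero]
  · nlinarith [hg.sign w h.ne]

lemma g_nonneg {w : ℝ} (hw : 0 ≤ w) : 0 ≤ g w := by
  rcases eq_or_lt_of_le hw with h | h
  · rw [← h, hg.zero]
  · nlinarith [hg.sign w h.ne']

lemma hasDerivAt_G (y : ℝ) : HasDerivAt (Gfun g) (g y) y :=
  intervalIntegral.integral_hasDerivAt_right
    (hg.diff.continuous.intervalIntegrable _ _)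
    hg.diff.continuous.stronglyMeasurable.stronglyMeasurableAtFilter
    hg.diff.continuous.continuousAt

lemma G_nonneg (y : ℝ) : 0 ≤ Gfun g y := by
  rcases le_total 0 y with h | h
  · exact intervalIntegral.integral_nonneg h fun t ht => g_nonneg hg ht.1
  · have h2' : 0 ≤ ∫ t in y..(0:ℝ), -g t :=
      intervalIntegral.integral_nonneg h fun t ht => neg_nonneg.2 (g_nonpos hg ht.2)
    rw [intervalIntegral.integral_neg] at h2'
    have h2 : ∫ t in y..(0:ℝ), g t ≤ 0 := by linarith
    have h3 : Gfun g y = -∫ t in y..(0:ℝ), g t := by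
      rw [Gfun, ← intervalIntegral.integral_symm]
    rw [h3]; linarith

include hc₁ in
lemma p_pos (y : ℝ) : 0 < pfun g c₁ y := mul_pos hc₁ (Real.exp_pos _)

lemma hasDerivAt_p (y : ℝ) : HasDerivAt (pfun g c₁) (-g y * pfun g c₁ y) y := by
  have h := ((hasDerivAt_G hg y).neg).exp.const_mul c₁
  have e : c₁ * (Real.exp (-Gfun g y) * -g y) = -g y * pfun g c₁ y := by
    rw [pfun]; ring
  rw [← e]
  exact h

lemma p_cont : Continuous (pfun g c₁) := by
  have : Continuous (Gfun g) := by
    rw [continuous_iff_continuousAt]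
    exact fun y => (hasDerivAt_G hg y).continuousAt
  exact continuous_const.mul (this.neg.rexp)

lemma p_int (hnorm : (∫ y : ℝ, pfun g c₁ y) = 1) : Integrable (pfun g c₁) := by
  by_contra h
  rw [integral_undef h] at hnorm
  norm_num at hnorm


variable (hnorm : (∫ y : ℝ, pfun g c₁ y) = 1)

include hc₁ hnorm

lemma F_sub (a b : ℝ) :
    Ffun g c₁ b - Ffun g c₁ a = ∫ y in a..b, pfun g c₁ y :=
  intervalIntegral.integral_Iic_sub_Iic (p_int hg hnorm).integrableOn (p_int hg hnorm).integrableOn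

lemma hasDerivAt_F (w : ℝ) : HasDerivAt (Ffun g c₁) (pfun g c₁ w) w := by
  have key : Ffun g c₁ = fun u => Ffun g c₁ 0 + ∫ y in (0:ℝ)..u, pfun g c₁ y := by
    funext u
    have := F_sub hg hc₁ hnorm 0 u
    linarith
  rw [key]
  exact (intervalIntegral.integral_hasDerivAt_right
    ((p_cont hg).intervalIntegrable _ _)
    (p_cont hg).stronglyMeasurable.stronglyMeasurableAtFilter
    (p_cont hg).continuousAt).const_add _

lemma F_mono {a b : ℝ} (hab : a ≤ b) : Ffun g c₁ a ≤ Ffun g c₁ b := by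
  have h1 := F_sub hg hc₁ hnorm a b
  have h2 : 0 ≤ ∫ y in a..b, pfun g c₁ y :=
    intervalIntegral.integral_nonneg hab fun t _ => (p_pos hg hc₁ t).le
  linarith

omit hnorm in
lemma F_nonneg (w : ℝ) : 0 ≤ Ffun g c₁ w :=
  setIntegral_nonneg measurableSet_Iic fun y _ => (p_pos hg hc₁ y).le

lemma F_le_one (w : ℝ) : Ffun g c₁ w ≤ 1 := by
  have := setIntegral_le_integral (p_int hg hnorm)
    (Filter.Eventually.of_forall fun y => (p_pos hg hc₁ y).le) (s := Set.Iic w)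
  rw [hnorm] at this
  exact this

lemma one_sub_F (w : ℝ) : 1 - Ffun g c₁ w = ∫ y in Set.Ioi w, pfun g c₁ y := by
  have h := intervalIntegral.integral_Iic_add_Ioi (b := w)
    (p_int hg hnorm).integrableOn (p_int hg hnorm).integrableOn
  rw [hnorm] at h
  rw [Ffun]
  linarith

lemma ineqA {w : ℝ} (hw : w ≤ 0) : -g w * Ffun g c₁ w ≤ pfun g c₁ w := by
  have key : ∀ a : ℝ, a ≤ w → -g w * ∫ y in a..w, pfun g c₁ y ≤ pfun g c₁ w := by
    intro a ha
    have ftc : ∫ y in a..w, -g y * pfun g c₁ y = pfun g c₁ w - pfun g c₁ a :=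
      intervalIntegral.integral_eq_sub_of_hasDerivAt
        (fun y _ => hasDerivAt_p hg y)
        ((hg.diff.continuous.neg.mul (p_cont hg)).intervalIntegrable a w)
    have mono : ∫ y in a..w, -g w * pfun g c₁ y ≤ ∫ y in a..w, -g y * pfun g c₁ y := by
      apply intervalIntegral.integral_mono_on ha
        ((continuous_const.mul (p_cont hg)).intervalIntegrable a w)
        ((hg.diff.continuous.neg.mul (p_cont hg)).intervalIntegrable a w)
      intro y hy
      have h1 : g y ≤ g w := hg.mono hy.2
      show -g w * pfun g c₁ y ≤ -g y * pfun g c₁ y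
      nlinarith [p_pos hg hc₁ y]
    rw [intervalIntegral.integral_const_mul] at mono
    nlinarith [p_pos hg hc₁ a]
  have tend : Filter.Tendsto (fun a => -g w * ∫ y in a..w, pfun g c₁ y)
      Filter.atBot (nhds (-g w * Ffun g c₁ w)) :=
    (intervalIntegral_tendsto_integral_Iic w (p_int hg hnorm).integrableOn
      Filter.tendsto_id).const_mul _
  exact le_of_tendsto tend (Filter.eventually_atBot.2 ⟨w, key⟩)

lemma ineqB {w : ℝ} (hw : 0 ≤ w) : g w * (1 - Ffun g c₁ w) ≤ pfun g c₁ w := by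
  have key : ∀ b : ℝ, w ≤ b → g w * ∫ y in w..b, pfun g c₁ y ≤ pfun g c₁ w := by
    intro b hb
    have ftc : ∫ y in w..b, g y * pfun g c₁ y
        = (fun u => -pfun g c₁ u) b - (fun u => -pfun g c₁ u) w := by
      apply intervalIntegral.integral_eq_sub_of_hasDerivAt
      · intro y _
        have := (hasDerivAt_p hg (c₁ := c₁) y).neg
        have e : -(-g y * pfun g c₁ y) = g y * pfun g c₁ y := by ring
        rw [e] at this
        exact this
      · exact (hg.diff.continuous.mul (p_cont hg)).intervalIntegrable w b
    simp only at ftc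
    have mono : ∫ y in w..b, g w * pfun g c₁ y ≤ ∫ y in w..b, g y * pfun g c₁ y := by
      apply intervalIntegral.integral_mono_on hb
        ((continuous_const.mul (p_cont hg)).intervalIntegrable w b)
        ((hg.diff.continuous.mul (p_cont hg)).intervalIntegrable w b)
      intro y hy
      have h1 : g w ≤ g y := hg.mono hy.1
      show g w * pfun g c₁ y ≤ g y * pfun g c₁ y
      nlinarith [p_pos hg hc₁ y]
    rw [intervalIntegral.integral_const_mul] at mono
    nlinarith [p_pos hg hc₁ b]
  have tend : Filter.Tendsto (fun b => g w * ∫ y in w..b, pfun g c₁ y)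
      Filter.atTop (nhds (g w * ∫ y in Set.Ioi w, pfun g c₁ y)) :=
    (intervalIntegral_tendsto_integral_Ioi w (p_int hg hnorm).integrableOn
      Filter.tendsto_id).const_mul _
  rw [one_sub_F hg hc₁ hnorm]
  exact le_of_tendsto tend (Filter.eventually_atTop.2 ⟨w, key⟩)

omit hc₁ hnorm in
lemma G_superadd {u w : ℝ} (h : (u ≤ 0 ∧ w ≤ 0) ∨ (0 ≤ u ∧ 0 ≤ w)) :
    Gfun g u + Gfun g w ≤ Gfun g (u + w) := by
  have split : Gfun g (u + w) = Gfun g w + ∫ t in w..(u+w), g t := by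
    have h2 := intervalIntegral.integral_add_adjacent_intervals (μ := volume) (f := g)
      (hg.diff.continuous.intervalIntegrable 0 w)
      (hg.diff.continuous.intervalIntegrable w (u+w))
    rw [Gfun, Gfun, ← h2]
  have comp : ∫ t in (0:ℝ)..u, g (t + w) = ∫ t in w..(u+w), g t := by
    have h3 := intervalIntegral.integral_comp_add_right (a := (0:ℝ)) (b := u) g w
    simpa using h3
  have mono : Gfun g u ≤ ∫ t in (0:ℝ)..u, g (t + w) := by
    rcases h with ⟨hu, hw⟩ | ⟨hu, hw⟩
    · have m2 : ∫ t in u..(0:ℝ), g (t+w) ≤ ∫ t in u..(0:ℝ), g t := by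
        apply intervalIntegral.integral_mono_on hu
          ((hg.diff.continuous.comp (continuous_add_right w)).intervalIntegrable u 0)
          (hg.diff.continuous.intervalIntegrable u 0)
        intro t _
        have ht : t + w ≤ t := by linarith
        exact hg.mono ht
      have e1 : ∫ t in (0:ℝ)..u, g (t+w) = -∫ t in u..(0:ℝ), g (t+w) :=
        intervalIntegral.integral_symm u 0
      have e2 : Gfun g u = -∫ t in u..(0:ℝ), g t := by
        rw [Gfun]; exact intervalIntegral.integral_symm u 0
      rw [e1, e2]; linarith
    · rw [Gfun]
      apply intervalIntegral.integral_mono_on hu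
        (hg.diff.continuous.intervalIntegrable 0 u)
        ((hg.diff.continuous.comp (continuous_add_right w)).intervalIntegrable 0 u)
      intro t _
      have ht : t ≤ t + w := by linarith
      exact hg.mono ht
  rw [split]
  linarith [comp ▸ mono]

lemma ineqC {w : ℝ} (hw : w ≤ 0) : c₁ * Ffun g c₁ w ≤ pfun g c₁ w := by
  have pt : ∀ y ∈ Set.Iic w, pfun g c₁ y
      ≤ Real.exp (-(Gfun g w)) * pfun g c₁ (y - w) := by
    intro y hy
    have hy' : y ≤ w := hy
    have h1 : Gfun g (y - w) + Gfun g w ≤ Gfun g y := by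
      have := G_superadd hg (u := y - w) (w := w) (Or.inl ⟨by linarith, hw⟩)
      have e : y - w + w = y := by ring
      rw [e] at this
      exact this
    rw [pfun, pfun]
    have h2 : Real.exp (-(Gfun g y))
        ≤ Real.exp (-(Gfun g w)) * Real.exp (-(Gfun g (y - w))) := by
      rw [← Real.exp_add]
      exact Real.exp_le_exp.2 (by linarith)
    nlinarith [Real.exp_pos (-(Gfun g y)), Real.exp_pos (-(Gfun g (y-w))),
      Real.exp_pos (-(Gfun g w))]
  have int1 : IntegrableOn (fun y => Real.exp (-(Gfun g w)) * pfun g c₁ (y - w)) (Set.Iic w) :=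
    (((p_int hg hnorm).comp_sub_right w).const_mul _).integrableOn
  have step := setIntegral_mono_on (p_int hg hnorm).integrableOn int1 measurableSet_Iic pt
  have trans : ∫ y in Set.Iic w, pfun g c₁ (y - w) = Ffun g c₁ 0 := by
    rw [← integral_indicator measurableSet_Iic]
    have e : (Set.Iic w).indicator (fun y => pfun g c₁ (y - w))
        = fun y => (Set.Iic (0:ℝ)).indicator (pfun g c₁) (y - w) := by
      funext y
      simp only [Set.indicator_apply, Set.mem_Iic, sub_nonpos]
    rw [e, integral_sub_right_eq_self ((Set.Iic (0:ℝ)).indicator (pfun g c₁)) w,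
      integral_indicator measurableSet_Iic]
    rfl
  rw [integral_const_mul, trans] at step
  have hF0 : Ffun g c₁ 0 ≤ 1 := F_le_one hg hc₁ hnorm 0
  have hF0' : 0 ≤ Ffun g c₁ 0 := F_nonneg hg hc₁ 0
  have hexp : 0 < Real.exp (-(Gfun g w)) := Real.exp_pos _
  have hFw : Ffun g c₁ w = ∫ x in Set.Iic w, pfun g c₁ x := rfl
  have : Ffun g c₁ w ≤ Real.exp (-(Gfun g w)) := by rw [hFw]; nlinarith
  rw [pfun]
  nlinarith

lemma ineqD {w : ℝ} (hw : 0 ≤ w) : c₁ * (1 - Ffun g c₁ w) ≤ pfun g c₁ w := by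
  have pt : ∀ y ∈ Set.Ioi w, pfun g c₁ y
      ≤ Real.exp (-(Gfun g w)) * pfun g c₁ (y - w) := by
    intro y hy
    have hy' : w < y := hy
    have h1 : Gfun g (y - w) + Gfun g w ≤ Gfun g y := by
      have := G_superadd hg (u := y - w) (w := w) (Or.inr ⟨by linarith, hw⟩)
      have e : y - w + w = y := by ring
      rw [e] at this
      exact this
    rw [pfun, pfun]
    have h2 : Real.exp (-(Gfun g y))
        ≤ Real.exp (-(Gfun g w)) * Real.exp (-(Gfun g (y - w))) := by
      rw [← Real.exp_add]
      exact Real.exp_le_exp.2 (by linarith)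
    nlinarith [Real.exp_pos (-(Gfun g y)), Real.exp_pos (-(Gfun g (y-w))),
      Real.exp_pos (-(Gfun g w))]
  have int1 : IntegrableOn (fun y => Real.exp (-(Gfun g w)) * pfun g c₁ (y - w)) (Set.Ioi w) :=
    (((p_int hg hnorm).comp_sub_right w).const_mul _).integrableOn
  have step := setIntegral_mono_on ((p_int hg hnorm)).integrableOn int1 measurableSet_Ioi pt
  have trans : ∫ y in Set.Ioi w, pfun g c₁ (y - w) = ∫ y in Set.Ioi (0:ℝ), pfun g c₁ y := by
    rw [← integral_indicator measurableSet_Ioi, ← integral_indicator measurableSet_Ioi]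
    have e : (Set.Ioi w).indicator (fun y => pfun g c₁ (y - w))
        = fun y => (Set.Ioi (0:ℝ)).indicator (pfun g c₁) (y - w) := by
      funext y
      simp only [Set.indicator_apply, Set.mem_Ioi, sub_pos]
    rw [e, integral_sub_right_eq_self ((Set.Ioi (0:ℝ)).indicator (pfun g c₁)) w]
  rw [integral_const_mul, trans] at step
  have h1F : 1 - Ffun g c₁ w = ∫ y in Set.Ioi w, pfun g c₁ y := one_sub_F hg hc₁ hnorm w
  have h1F0 : 1 - Ffun g c₁ 0 = ∫ y in Set.Ioi (0:ℝ), pfun g c₁ y := one_sub_F hg hc₁ hnorm 0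
  have hF0' : 0 ≤ Ffun g c₁ 0 := F_nonneg hg hc₁ 0
  have hexp : 0 < Real.exp (-(Gfun g w)) := Real.exp_pos _
  have : 1 - Ffun g c₁ w ≤ Real.exp (-(Gfun g w)) := by
    rw [h1F]
    calc ∫ y in Set.Ioi w, pfun g c₁ y ≤ Real.exp (-(Gfun g w)) * ∫ y in Set.Ioi (0:ℝ), pfun g c₁ y := step
    _ ≤ Real.exp (-(Gfun g w)) * 1 := by nlinarith [h1F0 ▸ (by linarith [F_nonneg hg hc₁ 0] : (1:ℝ) - Ffun g c₁ 0 ≤ 1)]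
    _ = Real.exp (-(Gfun g w)) := mul_one _
  rw [pfun]
  nlinarith


end SteinAux

/-- The solution `f_z` of the Stein equation `f'(w) - f(w) g(w) = I(w ≤ z) - F(z)`. -/
noncomputable def steinSol (g : ℝ → ℝ) (c₁ z w : ℝ) : ℝ :=
  if w ≤ z then Ffun g c₁ w * (1 - Ffun g c₁ z) / pfun g c₁ w
  else Ffun g c₁ z * (1 - Ffun g c₁ w) / pfun g c₁ w

namespace SteinAux

variable {g : ℝ → ℝ} {c₂ c₃ : ℝ} (hg : GCond g c₂ c₃) {c₁ : ℝ} (hc₁ : 0 < c₁)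
  (hnorm : (∫ y : ℝ, pfun g c₁ y) = 1)

set_option linter.unusedSectionVars false

include hg hc₁ hnorm

lemma hasDerivAt_phi1 (z w : ℝ) :
    HasDerivAt (fun u => Ffun g c₁ u * (1 - Ffun g c₁ z) / pfun g c₁ u)
      ((1 - Ffun g c₁ z) + Ffun g c₁ w * (1 - Ffun g c₁ z) / pfun g c₁ w * g w) w := by
  have h := ((hasDerivAt_F hg hc₁ hnorm w).div (hasDerivAt_p hg (c₁ := c₁) w)
    (p_pos hg hc₁ w).ne').mul_const (1 - Ffun g c₁ z)
  have e : (fun u => Ffun g c₁ u / pfun g c₁ u * (1 - Ffun g c₁ z))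
      = fun u => Ffun g c₁ u * (1 - Ffun g c₁ z) / pfun g c₁ u := by
    funext u; ring
  simp only [Pi.div_apply] at h
  rw [e] at h
  refine h.congr_deriv ?_
  have hp := (p_pos hg hc₁ w).ne'
  field_simp
  ring

lemma hasDerivAt_phi2 (z w : ℝ) :
    HasDerivAt (fun u => Ffun g c₁ z * (1 - Ffun g c₁ u) / pfun g c₁ u)
      (-Ffun g c₁ z + Ffun g c₁ z * (1 - Ffun g c₁ w) / pfun g c₁ w * g w) w := by
  have h := (((hasDerivAt_F hg hc₁ hnorm w).const_sub 1).div (hasDerivAt_p hg (c₁ := c₁) w)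
    (p_pos hg hc₁ w).ne').const_mul (Ffun g c₁ z)
  have e : (fun u => Ffun g c₁ z * ((1 - Ffun g c₁ u) / pfun g c₁ u))
      = fun u => Ffun g c₁ z * (1 - Ffun g c₁ u) / pfun g c₁ u := by
    funext u; ring
  simp only [Pi.div_apply] at h
  rw [e] at h
  refine h.congr_deriv ?_
  have hp := (p_pos hg hc₁ w).ne'
  field_simp
  ring

lemma deriv_stein_lt {z w : ℝ} (hwz : w < z) :
    deriv (steinSol g c₁ z) w
      = (1 - Ffun g c₁ z) + steinSol g c₁ z w * g w := by
  have heq : steinSol g c₁ z =ᶠ[nhds w]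
      fun u => Ffun g c₁ u * (1 - Ffun g c₁ z) / pfun g c₁ u := by
    filter_upwards [Iio_mem_nhds hwz] with u hu
    rw [steinSol, if_pos (le_of_lt hu)]
  rw [heq.deriv_eq, (hasDerivAt_phi1 hg hc₁ hnorm z w).deriv, steinSol, if_pos hwz.le]

lemma deriv_stein_gt {z w : ℝ} (hwz : z < w) :
    deriv (steinSol g c₁ z) w
      = -Ffun g c₁ z + steinSol g c₁ z w * g w := by
  have heq : steinSol g c₁ z =ᶠ[nhds w]
      fun u => Ffun g c₁ z * (1 - Ffun g c₁ u) / pfun g c₁ u := by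
    filter_upwards [Ioi_mem_nhds hwz] with u hu
    rw [steinSol, if_neg (not_le.2 hu)]
  rw [heq.deriv_eq, (hasDerivAt_phi2 hg hc₁ hnorm z w).deriv, steinSol,
    if_neg (not_le.2 hwz)]

lemma deriv_stein_eq (z : ℝ) : deriv (steinSol g c₁ z) z = 0 := by
  apply deriv_zero_of_not_differentiableAt
  intro hdiff
  have hd := hdiff.hasDerivAt
  have h1 : HasDerivWithinAt (steinSol g c₁ z)
      ((1 - Ffun g c₁ z) + Ffun g c₁ z * (1 - Ffun g c₁ z) / pfun g c₁ z * g z)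
      (Set.Iic z) z := by
    apply ((hasDerivAt_phi1 hg hc₁ hnorm z z).hasDerivWithinAt).congr
    · intro u hu
      rw [steinSol, if_pos (Set.mem_Iic.1 hu)]
    · rw [steinSol, if_pos le_rfl]
  have h2 : HasDerivWithinAt (steinSol g c₁ z)
      (-Ffun g c₁ z + Ffun g c₁ z * (1 - Ffun g c₁ z) / pfun g c₁ z * g z)
      (Set.Ici z) z := by
    apply ((hasDerivAt_phi2 hg hc₁ hnorm z z).hasDerivWithinAt).congr
    · intro u hu
      rcases eq_or_lt_of_le (Set.mem_Ici.1 hu) with h | h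
      · rw [← h, steinSol, if_pos le_rfl]
      · rw [steinSol, if_neg (not_le.2 h)]
    · rw [steinSol, if_pos le_rfl]
  have e1 : derivWithin (steinSol g c₁ z) (Set.Iic z) z = deriv (steinSol g c₁ z) z :=
    (hd.hasDerivWithinAt).derivWithin (uniqueDiffOn_Iic z z Set.self_mem_Iic)
  have e1' := h1.derivWithin (uniqueDiffOn_Iic z z Set.self_mem_Iic)
  have e2 : derivWithin (steinSol g c₁ z) (Set.Ici z) z = deriv (steinSol g c₁ z) z :=
    (hd.hasDerivWithinAt).derivWithin (uniqueDiffOn_Ici z z Set.self_mem_Ici)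
  have e2' := h2.derivWithin (uniqueDiffOn_Ici z z Set.self_mem_Ici)
  have : (1 - Ffun g c₁ z) + Ffun g c₁ z * (1 - Ffun g c₁ z) / pfun g c₁ z * g z
      = -Ffun g c₁ z + Ffun g c₁ z * (1 - Ffun g c₁ z) / pfun g c₁ z * g z := by
    rw [← e1', ← e2', e1, e2]
  linarith [this]

end SteinAux

theorem stmt_12 (g : ℝ → ℝ) (c₁ c₂ c₃ : ℝ) (hg : GCond g c₂ c₃)
    (hc₁ : 0 < c₁)
    (hnorm : (∫ y : ℝ, pfun g c₁ y) = 1)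
    (z : ℝ) (hz : 0 ≤ z) :
    ((∀ w : ℝ, w ≤ 0 → |steinSol g c₁ z w * g w| ≤ 1 - Ffun g c₁ z) ∧
      (∀ w : ℝ, 0 < w → |steinSol g c₁ z w * g w| ≤ Ffun g c₁ z)) ∧
    ((∀ w : ℝ, w ≤ 0 → steinSol g c₁ z w ≤ (1 - Ffun g c₁ z) / c₁) ∧
      (∀ w : ℝ, 0 < w → steinSol g c₁ z w ≤ Ffun g c₁ z / c₁)) ∧
    ((∀ w : ℝ, w ≤ 0 → |deriv (steinSol g c₁ z) w| ≤ 2 * (1 - Ffun g c₁ z)) ∧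
      (∀ w : ℝ, 0 < w → w ≤ z → |deriv (steinSol g c₁ z) w| ≤ 1) ∧
      (∀ w : ℝ, z < w → |deriv (steinSol g c₁ z) w| ≤ 2 * Ffun g c₁ z)) := by
  have hp : ∀ w, 0 < pfun g c₁ w := SteinAux.p_pos hg hc₁
  have hFz0 : 0 ≤ Ffun g c₁ z := SteinAux.F_nonneg hg hc₁ z
  have hFz1 : Ffun g c₁ z ≤ 1 := SteinAux.F_le_one hg hc₁ hnorm z
  -- part (i)
  have i1 : ∀ w : ℝ, w ≤ 0 → |steinSol g c₁ z w * g w| ≤ 1 - Ffun g c₁ z := by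
    intro w hw
    have hwz : w ≤ z := hw.trans hz
    have hgw : g w ≤ 0 := SteinAux.g_nonpos hg hw
    have hFw0 : 0 ≤ Ffun g c₁ w := SteinAux.F_nonneg hg hc₁ w
    have hpw := hp w
    have hA := SteinAux.ineqA hg hc₁ hnorm hw
    rw [steinSol, if_pos hwz,
      abs_of_nonpos (mul_nonpos_of_nonneg_of_nonpos
        (div_nonneg (mul_nonneg hFw0 (by linarith)) hpw.le) hgw)]
    have key : -(Ffun g c₁ w * (1 - Ffun g c₁ z) / pfun g c₁ w * g w) * pfun g c₁ w
        = (1 - Ffun g c₁ z) * (-g w * Ffun g c₁ w) := by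
      field_simp [hpw.ne']
    have h1 : -(Ffun g c₁ w * (1 - Ffun g c₁ z) / pfun g c₁ w * g w) * pfun g c₁ w
        ≤ (1 - Ffun g c₁ z) * pfun g c₁ w := by
      rw [key]
      nlinarith [mul_le_mul_of_nonneg_left hA (by linarith : (0:ℝ) ≤ 1 - Ffun g c₁ z)]
    exact le_of_mul_le_mul_right h1 hpw
  have i2 : ∀ w : ℝ, 0 < w → |steinSol g c₁ z w * g w| ≤ Ffun g c₁ z := by
    intro w hw
    have hgw : 0 ≤ g w := SteinAux.g_nonneg hg hw.le
    have hpw := hp w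
    have hFw0 : 0 ≤ Ffun g c₁ w := SteinAux.F_nonneg hg hc₁ w
    have hFw1 : Ffun g c₁ w ≤ 1 := SteinAux.F_le_one hg hc₁ hnorm w
    have hB := SteinAux.ineqB hg hc₁ hnorm hw.le
    by_cases hwz : w ≤ z
    · rw [steinSol, if_pos hwz,
        abs_of_nonneg (mul_nonneg
          (div_nonneg (mul_nonneg hFw0 (by linarith)) hpw.le) hgw)]
      have hFm : Ffun g c₁ w ≤ Ffun g c₁ z := SteinAux.F_mono hg hc₁ hnorm hwz
      have key : Ffun g c₁ w * (1 - Ffun g c₁ z) / pfun g c₁ w * g w * pfun g c₁ w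
          = Ffun g c₁ w * (1 - Ffun g c₁ z) * g w := by field_simp [hpw.ne']
      have h1 : Ffun g c₁ w * (1 - Ffun g c₁ z) / pfun g c₁ w * g w * pfun g c₁ w
          ≤ Ffun g c₁ z * pfun g c₁ w := by
        rw [key]
        nlinarith [mul_le_mul_of_nonneg_left hB hFz0,
          mul_nonneg hgw (sub_nonneg.2 hFm)]
      exact le_of_mul_le_mul_right h1 hpw
    · push_neg at hwz
      rw [steinSol, if_neg (not_le.2 hwz),
        abs_of_nonneg (mul_nonneg
          (div_nonneg (mul_nonneg hFz0 (by linarith)) hpw.le) hgw)]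
      have key : Ffun g c₁ z * (1 - Ffun g c₁ w) / pfun g c₁ w * g w * pfun g c₁ w
          = Ffun g c₁ z * (1 - Ffun g c₁ w) * g w := by field_simp [hpw.ne']
      have h1 : Ffun g c₁ z * (1 - Ffun g c₁ w) / pfun g c₁ w * g w * pfun g c₁ w
          ≤ Ffun g c₁ z * pfun g c₁ w := by
        rw [key]
        nlinarith [mul_le_mul_of_nonneg_left hB hFz0]
      exact le_of_mul_le_mul_right h1 hpw
  -- part (ii)
  have ii1 : ∀ w : ℝ, w ≤ 0 → steinSol g c₁ z w ≤ (1 - Ffun g c₁ z) / c₁ := by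
    intro w hw
    have hwz : w ≤ z := hw.trans hz
    have hpw := hp w
    have hFw0 : 0 ≤ Ffun g c₁ w := SteinAux.F_nonneg hg hc₁ w
    have hC := SteinAux.ineqC hg hc₁ hnorm hw
    rw [steinSol, if_pos hwz, div_le_div_iff₀ hpw hc₁]
    nlinarith [mul_le_mul_of_nonneg_left hC (by linarith : (0:ℝ) ≤ 1 - Ffun g c₁ z)]
  have ii2 : ∀ w : ℝ, 0 < w → steinSol g c₁ z w ≤ Ffun g c₁ z / c₁ := by
    intro w hw
    have hpw := hp w
    have hFw0 : 0 ≤ Ffun g c₁ w := SteinAux.F_nonneg hg hc₁ w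
    have hFw1 : Ffun g c₁ w ≤ 1 := SteinAux.F_le_one hg hc₁ hnorm w
    have hD := SteinAux.ineqD hg hc₁ hnorm hw.le
    by_cases hwz : w ≤ z
    · have hFm : Ffun g c₁ w ≤ Ffun g c₁ z := SteinAux.F_mono hg hc₁ hnorm hwz
      rw [steinSol, if_pos hwz, div_le_div_iff₀ hpw hc₁]
      nlinarith [mul_le_mul_of_nonneg_left hD hFz0,
        mul_le_mul_of_nonneg_left
          (show Ffun g c₁ w * (1 - Ffun g c₁ z) ≤ Ffun g c₁ z * (1 - Ffun g c₁ w) by nlinarith)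
          hc₁.le]
    · push_neg at hwz
      rw [steinSol, if_neg (not_le.2 hwz), div_le_div_iff₀ hpw hc₁]
      nlinarith [mul_le_mul_of_nonneg_left hD hFz0]
  -- part (iii)
  have iii1 : ∀ w : ℝ, w ≤ 0 → |deriv (steinSol g c₁ z) w| ≤ 2 * (1 - Ffun g c₁ z) := by
    intro w hw
    rcases eq_or_lt_of_le (hw.trans hz) with heq | hlt
    · rw [heq, SteinAux.deriv_stein_eq hg hc₁ hnorm z]
      rw [abs_zero]
      linarith
    · rw [SteinAux.deriv_stein_lt hg hc₁ hnorm hlt]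
      have habs := abs_le.1 (i1 w hw)
      rw [abs_le]
      constructor <;> linarith [habs.1, habs.2]
  have iii2 : ∀ w : ℝ, 0 < w → w ≤ z → |deriv (steinSol g c₁ z) w| ≤ 1 := by
    intro w hw0 hwz
    rcases eq_or_lt_of_le hwz with heq | hlt
    · rw [heq, SteinAux.deriv_stein_eq hg hc₁ hnorm z, abs_zero]
      norm_num
    · rw [SteinAux.deriv_stein_lt hg hc₁ hnorm hlt]
      have habs := abs_le.1 (i2 w hw0)
      have hT : 0 ≤ steinSol g c₁ z w * g w := by
        rw [steinSol, if_pos hwz]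
        exact mul_nonneg
          (div_nonneg (mul_nonneg (SteinAux.F_nonneg hg hc₁ w) (by linarith)) (hp w).le)
          (SteinAux.g_nonneg hg hw0.le)
      rw [abs_le]
      constructor <;> linarith [habs.1, habs.2]
  have iii3 : ∀ w : ℝ, z < w → |deriv (steinSol g c₁ z) w| ≤ 2 * Ffun g c₁ z := by
    intro w hwz
    have hw0 : 0 < w := lt_of_le_of_lt hz hwz
    rw [SteinAux.deriv_stein_gt hg hc₁ hnorm hwz]
    have habs := abs_le.1 (i2 w hw0)
    have hFw1 : Ffun g c₁ w ≤ 1 := SteinAux.F_le_one hg hc₁ hnorm w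
    have hT : 0 ≤ steinSol g c₁ z w * g w := by
      rw [steinSol, if_neg (not_le.2 hwz)]
      exact mul_nonneg
        (div_nonneg (mul_nonneg hFz0 (by linarith)) (hp w).le)
        (SteinAux.g_nonneg hg hw0.le)
    rw [abs_le]
    constructor <;> linarith [habs.1, habs.2]
  exact ⟨⟨i1, i2⟩, ⟨ii1, ii2⟩, ⟨iii1, iii2, iii3⟩⟩
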